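/- Let v be a node of a tree with children v₁,…,v_k labeled by binary vectors ż_{v₁},…,ż_{v_k} ∈ {0,1}ⁿ with ‖ż_{v₁}‖₁ ≤ … ≤ ‖ż_{v_k}‖₁, and k ≥ 4. Replace children v₁,…,v_{k−2} by a new node u that becomes a child of v (so v has children v_{k−1}, v_k, u and u has children v₁,…,v_{k−2}). Then the new local cost 3·‖⋁ᵢ ż_{vᵢ}‖₁ + (k−2)·‖⋁_{i≤k−2} ż_{vᵢ}‖₁ is at most the old local cost k·‖⋁ᵢ ż_{vᵢ}‖₁. -/

import Mathlib

/-- Hamming weight of a binary vector. -/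
def hw {n : ℕ} (z : Fin n → Bool) : ℕ := (Finset.univ.filter (fun i => z i = true)).card

/-- Coordinatewise OR of a list of binary vectors. -/
def orv {n : ℕ} (ys : List (Fin n → Bool)) : Fin n → Bool := fun i => ys.any (fun y => y i)

lemma hw_or {n : ℕ} (a b : Fin n → Bool) (h : ∀ i, ¬(a i = true ∧ b i = true)) :
    hw (fun i => a i || b i) = hw a + hw b := by
  unfold hw
  rw [← Finset.card_union_of_disjoint]
  · congr 1
    ext i
    simp [Bool.or_eq_true]
  · rw [Finset.disjoint_filter]
    intro i _ ha hb
    exact h i ⟨ha, hb⟩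

lemma orv_cons {n : ℕ} (a : Fin n → Bool) (l : List (Fin n → Bool)) :
    orv (a :: l) = fun i => a i || orv l i := by
  funext i; simp [orv]

lemma hw_orv {n : ℕ} (l : List (Fin n → Bool))
    (h : l.Pairwise (fun a b => ∀ i, ¬(a i = true ∧ b i = true))) :
    hw (orv l) = (l.map hw).sum := by
  induction l with
  | nil => simp [orv, hw]
  | cons a l ih =>
    rw [List.pairwise_cons] at h
    rw [orv_cons, hw_or a (orv l), List.map_cons, List.sum_cons, ih h.2]
    intro i ⟨ha, hb⟩
    simp only [orv, List.any_eq_true] at hb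
    obtain ⟨b, hb, hbi⟩ := hb
    exact h.1 b hb i ⟨ha, hbi⟩

theorem stmt_13 (n : ℕ) (zs : List (Fin n → Bool)) (hk : 4 ≤ zs.length)
    (hdisj : zs.Pairwise (fun a b => ∀ i, ¬(a i = true ∧ b i = true)))
    (hsorted : (zs.map hw).Pairwise (· ≤ ·)) :
    3 * hw (orv zs) + (zs.length - 2) * hw (orv (zs.take (zs.length - 2))) ≤
      zs.length * hw (orv zs) := by
  set k := zs.length with hkdef
  have hS : hw (orv zs) = (zs.map hw).sum := hw_orv zs hdisj
  have hT : hw (orv (zs.take (k - 2))) = ((zs.take (k - 2)).map hw).sum :=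
    hw_orv _ (hdisj.sublist (List.take_sublist _ _))
  set ws := zs.map hw with hws
  have hwslen : ws.length = k := by simp [hws, hkdef]
  have htake : (zs.take (k - 2)).map hw = ws.take (k - 2) := by
    simp [hws, List.map_take]
  rw [hS, hT, htake]
  -- split ws into take and drop
  have hsplit : ws = ws.take (k - 2) ++ ws.drop (k - 2) := (List.take_append_drop _ _).symm
  have hdroplen : (ws.drop (k - 2)).length = 2 := by
    rw [List.length_drop, hwslen]; omega
  obtain ⟨a, b, hab⟩ : ∃ a b, ws.drop (k - 2) = [a, b] := by
    match hd : ws.drop (k - 2), hdroplen with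
    | [a, b], _ => exact ⟨a, b, rfl⟩
  have hpair : ∀ x ∈ ws.take (k - 2), ∀ y ∈ ws.drop (k - 2), x ≤ y := by
    have := hsorted
    rw [hsplit, List.pairwise_append] at this
    exact this.2.2
  have hab' : a ≤ b := by
    have : (ws.drop (k - 2)).Pairwise (· ≤ ·) := hsorted.drop
    rw [hab] at this
    simp only [List.pairwise_cons] at this
    exact this.1 b (by simp)
  have hTa : (ws.take (k - 2)).sum ≤ (k - 2) * a := by
    calc (ws.take (k - 2)).sum ≤ (ws.take (k - 2)).length * a := by
          apply List.sum_le_card_nsmul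
          intro x hx
          exact hpair x hx a (by rw [hab]; simp)
      _ ≤ (k - 2) * a := by
          apply Nat.mul_le_mul_right
          rw [List.length_take]; omega
  have hsum : ws.sum = (ws.take (k - 2)).sum + (a + b) := by
    conv_lhs => rw [hsplit]
    rw [List.sum_append, hab]; simp [add_assoc]
  set T := (ws.take (k - 2)).sum
  rw [hsum]
  have h2 : 2 ≤ k - 2 := by omega
  set m := k - 2 with hm
  have hk' : k = m + 2 := by omega
  rw [hk']
  nlinarith [Nat.mul_le_mul_left 1 hab', hTa, h2, Nat.mul_le_mul (le_refl (m-2)) (Nat.zero_le a)]
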